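/- arXiv:2311.00680 — 9 statements merged into one kernel-verified Lean document; each statement's English description precedes it below -/
import Mathlib

section
/- Let 0 ≤ δ < 1 and f(z) = 1/z + δz. Then f maps the open unit disc minus the origin injectively into the complement of the closed elliptical set K_δ = {x+iy : x²/(1+δ)² + y²/(1-δ)² ≤ 1}; that is, for z, w in 𝔻 \ {0}, f(z) = f(w) implies z = w, and f(z) ∉ K_δ for all z ∈ 𝔻 \ {0}. -/
set_option maxHeartbeats 1000000


/-- For `0 ≤ δ < 1`, the map `f(z) = 1/z + δz` maps `𝔻 \ {0}` injectively into the
complement of the closed elliptical set `K_δ`. -/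
theorem zhukovskii_injective_into_complement_of_Kdelta (δ : ℝ) (hδ0 : 0 ≤ δ) (hδ1 : δ < 1) :
    (∀ z w : ℂ, ‖z‖ < 1 → z ≠ 0 → ‖w‖ < 1 → w ≠ 0 →
        1 / z + (δ : ℂ) * z = 1 / w + (δ : ℂ) * w → z = w) ∧
      (∀ z : ℂ, ‖z‖ < 1 → z ≠ 0 →
        (1 / z + (δ : ℂ) * z) ∉
          {c : ℂ | c.re ^ 2 / (1 + δ) ^ 2 + c.im ^ 2 / (1 - δ) ^ 2 ≤ 1}) := by
  constructor
  · intro z w hz hz0 hw hw0 h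
    have key : (z - w) * ((δ : ℂ) * z * w - 1) = 0 := by
      field_simp at h
      linear_combination h
    have hne : (δ : ℂ) * z * w - 1 ≠ 0 := by
      intro hc
      have h1 : (δ : ℂ) * z * w = 1 := by linear_combination hc
      have hz' : 0 ≤ ‖z‖ := norm_nonneg z
      have hw' : 0 ≤ ‖w‖ := norm_nonneg w
      have hzw : ‖z‖ * ‖w‖ < 1 := by nlinarith
      have : ‖(δ : ℂ) * z * w‖ < 1 := by
        rw [norm_mul, norm_mul, Complex.norm_real, Real.norm_eq_abs, abs_of_nonneg hδ0]
        nlinarith [mul_nonneg hz' hw']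
      rw [h1] at this
      simp at this
    rcases mul_eq_zero.mp key with h' | h'
    · linear_combination h'
    · exact absurd h' hne
  · intro z hz hz0 hmem
    simp only [Set.mem_setOf_eq] at hmem
    set r := ‖z‖ with hr
    have hr0 : 0 < r := norm_pos_iff.mpr hz0
    have hsq : z.re ^ 2 + z.im ^ 2 = r ^ 2 := by
      rw [hr, Complex.sq_norm, Complex.normSq_apply]; ring
    set x := z.re
    set y := z.im
    have hns : z.re * z.re + z.im * z.im = r ^ 2 := by nlinarith [hsq]
    have hre : (1 / z + (δ : ℂ) * z).re = x / r ^ 2 + δ * x := by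
      rw [Complex.add_re, Complex.mul_re, Complex.ofReal_re, Complex.ofReal_im,
        one_div, Complex.inv_re, Complex.normSq_apply, hns]
      ring
    have him : (1 / z + (δ : ℂ) * z).im = -y / r ^ 2 + δ * y := by
      rw [Complex.add_im, Complex.mul_im, Complex.ofReal_re, Complex.ofReal_im,
        one_div, Complex.inv_im, Complex.normSq_apply, hns]
      ring
    rw [hre, him] at hmem
    have h1 : (0:ℝ) < 1 + δ := by linarith
    have h2 : (0:ℝ) < 1 - δ := by linarith
    have hδr : δ * r < 1 := by nlinarith [mul_nonneg h2.le hr0.le]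
    have hA : 1 + δ * r ^ 2 > r * (1 + δ) := by
      nlinarith [mul_pos (show (0:ℝ) < 1 - r by linarith) (show (0:ℝ) < 1 - δ * r by linarith)]
    have hB : 1 - δ * r ^ 2 > r * (1 - δ) := by
      nlinarith [mul_pos (show (0:ℝ) < 1 - r by linarith)
        (show (0:ℝ) < 1 + δ * r by positivity)]
    have hA2 : (1 + δ * r ^ 2) ^ 2 > r ^ 2 * (1 + δ) ^ 2 := by
      have h := mul_self_lt_mul_self (by positivity : (0:ℝ) ≤ r * (1 + δ)) hA
      nlinarith [h]
    have hB2 : (1 - δ * r ^ 2) ^ 2 > r ^ 2 * (1 - δ) ^ 2 := by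
      have h := mul_self_lt_mul_self (by positivity : (0:ℝ) ≤ r * (1 - δ)) hB
      nlinarith [h]
    -- clear denominators in hmem
    have key : x ^ 2 * (1 + δ * r ^ 2) ^ 2 * (1 - δ) ^ 2
        + y ^ 2 * (1 - δ * r ^ 2) ^ 2 * (1 + δ) ^ 2
        ≤ r ^ 4 * (1 + δ) ^ 2 * (1 - δ) ^ 2 := by
      have e1 : x ^ 2 * (1 + δ * r ^ 2) ^ 2 * (1 - δ) ^ 2
          + y ^ 2 * (1 - δ * r ^ 2) ^ 2 * (1 + δ) ^ 2
          = ((x / r ^ 2 + δ * x) ^ 2 / (1 + δ) ^ 2 + (-y / r ^ 2 + δ * y) ^ 2 / (1 - δ) ^ 2)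
            * (r ^ 4 * (1 + δ) ^ 2 * (1 - δ) ^ 2) := by
        field_simp
        ring
      rw [e1]
      calc ((x / r ^ 2 + δ * x) ^ 2 / (1 + δ) ^ 2 + (-y / r ^ 2 + δ * y) ^ 2 / (1 - δ) ^ 2)
            * (r ^ 4 * (1 + δ) ^ 2 * (1 - δ) ^ 2)
          ≤ 1 * (r ^ 4 * (1 + δ) ^ 2 * (1 - δ) ^ 2) :=
            mul_le_mul_of_nonneg_right hmem (by positivity)
        _ = r ^ 4 * (1 + δ) ^ 2 * (1 - δ) ^ 2 := by ring
    by_cases hx0 : x = 0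
    · have hy0 : y ^ 2 = r ^ 2 := by rw [hx0] at hsq; linarith
      rw [hx0, hy0] at key
      nlinarith [key, mul_lt_mul_of_pos_left hB2
        (show (0:ℝ) < r ^ 2 * (1 + δ) ^ 2 by positivity)]
    · have hx2 : 0 < x ^ 2 := by positivity
      nlinarith [key, hsq,
        mul_pos (mul_pos hx2 (show (0:ℝ) < (1 + δ * r ^ 2) ^ 2 - r ^ 2 * (1 + δ) ^ 2 by linarith))
          (show (0:ℝ) < (1 - δ) ^ 2 by positivity),
        mul_nonneg (mul_nonneg (sq_nonneg y)
          (show (0:ℝ) ≤ (1 - δ * r ^ 2) ^ 2 - r ^ 2 * (1 - δ) ^ 2 by linarith))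
          (sq_nonneg (1 + δ)),
        mul_pos (mul_pos (mul_pos hr0 hr0) (mul_pos h1 h1)) (mul_pos h2 h2)]
end

section
/- Let 0 < δ < 1 and let π(λ) = λ + δ/λ. Then for any s ∈ ℂ, the point s lies in the open elliptical region G_δ = {x+iy : x²/(1+δ)² + y²/(1-δ)² < 1} if and only if (s, δ) lies in the symmetrized bidisc G = {(z+w, zw) : z, w ∈ ℂ, |z| < 1, |w| < 1}. -/
open Complex

private lemma ellipse_iff_abs (δ : ℝ) (hδ0 : 0 < δ) (hδ1 : δ < 1) (s : ℂ) :
    s.re ^ 2 / (1 + δ) ^ 2 + s.im ^ 2 / (1 - δ) ^ 2 < 1 ↔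
      ‖s - (δ : ℂ) * (starRingEnd ℂ) s‖ < 1 - δ ^ 2 := by
  have hd1 : (0:ℝ) < (1+δ)^2 := by positivity
  have hd2 : (0:ℝ) < (1-δ)^2 := by nlinarith
  have hE2 : (‖s - (δ:ℂ) * (starRingEnd ℂ) s‖)^2
      = ((1-δ)*s.re)^2 + ((1+δ)*s.im)^2 := by
    rw [Complex.sq_norm, Complex.normSq_apply]
    simp [Complex.mul_re, Complex.mul_im]
    ring
  have hEnn : 0 ≤ ‖s - (δ:ℂ) * (starRingEnd ℂ) s‖ := norm_nonneg _
  rw [div_add_div _ _ hd1.ne' hd2.ne', div_lt_one (by positivity)]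
  constructor
  · intro h
    have hsq : (‖s - (δ:ℂ) * (starRingEnd ℂ) s‖)^2 < (1 - δ^2)^2 := by
      rw [hE2]; nlinarith
    exact lt_of_pow_lt_pow_left₀ 2 (by nlinarith) hsq
  · intro h
    have hsq := pow_lt_pow_left₀ h hEnn (n := 2) two_ne_zero
    nlinarith [hE2]

private lemma root_lt_one (δ : ℝ) (hδ0 : 0 < δ) (hδ1 : δ < 1) (s z w : ℂ)
    (hs : z + w = s) (hp : z * w = (δ:ℂ)) (hle : ‖w‖ ≤ ‖z‖)
    (hE : ‖s - (δ:ℂ) * (starRingEnd ℂ) s‖ < 1 - δ ^ 2) :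
    ‖z‖ < 1 := by
  by_contra hc
  push_neg at hc
  set a := ‖z‖ with ha
  set b := ‖w‖ with hb
  have hab : a * b = δ := by
    rw [ha, hb, ← norm_mul, hp, Complex.norm_real, Real.norm_eq_abs, _root_.abs_of_pos hδ0]
  have hb0 : 0 ≤ b := norm_nonneg w
  have hblt : b < 1 := by nlinarith
  have hwc : (1 : ℂ) - w * (starRingEnd ℂ) w = ((1 - b^2 : ℝ) : ℂ) := by
    rw [Complex.mul_conj]
    push_cast [← Complex.sq_norm]
    ring
  have hzc : (1 : ℂ) - z * (starRingEnd ℂ) z = ((1 - a^2 : ℝ) : ℂ) := by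
    rw [Complex.mul_conj]
    push_cast [← Complex.sq_norm]
    ring
  have hid : s - (δ:ℂ) * (starRingEnd ℂ) s
      = z * (1 - w * (starRingEnd ℂ) w) + w * (1 - z * (starRingEnd ℂ) z) := by
    rw [← hs, ← hp, map_add]; ring
  have hX : ‖z * (1 - w * (starRingEnd ℂ) w)‖ = a * (1 - b^2) := by
    rw [norm_mul, hwc, Complex.norm_real, Real.norm_eq_abs, _root_.abs_of_nonneg (by nlinarith)]
  have hY : ‖w * (1 - z * (starRingEnd ℂ) z)‖ = b * (a^2 - 1) := by
    rw [norm_mul, hzc, Complex.norm_real, Real.norm_eq_abs, _root_.abs_of_nonpos (by nlinarith)]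
    ring
  have htri : ‖z * (1 - w * (starRingEnd ℂ) w)‖
      ≤ ‖s - (δ:ℂ) * (starRingEnd ℂ) s‖
        + ‖w * (1 - z * (starRingEnd ℂ) z)‖ := by
    calc ‖z * (1 - w * (starRingEnd ℂ) w)‖
        = ‖(s - (δ:ℂ) * (starRingEnd ℂ) s)
            + -(w * (1 - z * (starRingEnd ℂ) z))‖ := by rw [hid]; ring_nf
      _ ≤ _ := by
          refine (norm_add_le _ _).trans ?_
          simp
  rw [hX, hY] at htri
  nlinarith [mul_nonneg (mul_nonneg (sub_nonneg.2 hc) (sub_nonneg.2 hblt.le))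
    (sub_nonneg.2 (show a * b ≤ 1 by nlinarith))]

/-- For `0 < δ < 1`, a point `s ∈ ℂ` lies in the open elliptical region `G_δ` if and only if
`(s, δ)` lies in the symmetrized bidisc `G = {(z+w, zw) : |z| < 1, |w| < 1}`. -/
theorem mem_ellipse_iff_mem_symmetrized_bidisc (δ : ℝ) (hδ0 : 0 < δ) (hδ1 : δ < 1) (s : ℂ) :
    s.re ^ 2 / (1 + δ) ^ 2 + s.im ^ 2 / (1 - δ) ^ 2 < 1 ↔
      (s, (δ : ℂ)) ∈ {p : ℂ × ℂ | ∃ z w : ℂ, ‖z‖ < 1 ∧ ‖w‖ < 1 ∧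
        p = (z + w, z * w)} := by
  rw [ellipse_iff_abs δ hδ0 hδ1]
  constructor
  · intro hE
    obtain ⟨u, hu⟩ := IsAlgClosed.exists_pow_nat_eq (k := ℂ) (s^2 - 4*δ) zero_lt_two
    set z := (s + u) / 2 with hzdef
    set w := (s - u) / 2 with hwdef
    have hs : z + w = s := by rw [hzdef, hwdef]; ring
    have hp : z * w = (δ:ℂ) := by
      rw [hzdef, hwdef]
      linear_combination (-(1:ℂ)/4) * hu
    rcases le_total (‖w‖) (‖z‖) with h1 | h1
    · have hz1 := root_lt_one δ hδ0 hδ1 s z w hs hp h1 hE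
      exact ⟨z, w, hz1, lt_of_le_of_lt h1 hz1, by rw [hs, hp]⟩
    · have hs' : w + z = s := by rw [add_comm]; exact hs
      have hp' : w * z = (δ:ℂ) := by rw [mul_comm]; exact hp
      have hw1 := root_lt_one δ hδ0 hδ1 s w z hs' hp' h1 hE
      exact ⟨w, z, hw1, lt_of_le_of_lt h1 hw1, by rw [hs', hp']⟩
  · rintro ⟨z, w, hz, hw, hp⟩
    rw [Prod.mk.injEq] at hp
    obtain ⟨hs, hd⟩ := hp
    set a := ‖z‖ with ha
    set b := ‖w‖ with hb
    have hab : δ = a * b := by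
      rw [ha, hb, ← norm_mul, ← hd, Complex.norm_real, Real.norm_eq_abs, _root_.abs_of_pos hδ0]
    have ha0 : 0 ≤ a := norm_nonneg z
    have hb0 : 0 ≤ b := norm_nonneg w
    have hwc : (1 : ℂ) - w * (starRingEnd ℂ) w = ((1 - b^2 : ℝ) : ℂ) := by
      rw [Complex.mul_conj]
      push_cast [← Complex.sq_norm]
      ring
    have hzc : (1 : ℂ) - z * (starRingEnd ℂ) z = ((1 - a^2 : ℝ) : ℂ) := by
      rw [Complex.mul_conj]
      push_cast [← Complex.sq_norm]
      ring
    have hid : s - (δ:ℂ) * (starRingEnd ℂ) s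
        = z * (1 - w * (starRingEnd ℂ) w) + w * (1 - z * (starRingEnd ℂ) z) := by
      rw [hs, hd, map_add]; ring
    have hX : ‖z * (1 - w * (starRingEnd ℂ) w)‖ = a * (1 - b^2) := by
      rw [norm_mul, hwc, Complex.norm_real, Real.norm_eq_abs, _root_.abs_of_nonneg (by nlinarith)]
    have hY : ‖w * (1 - z * (starRingEnd ℂ) z)‖ = b * (1 - a^2) := by
      rw [norm_mul, hzc, Complex.norm_real, Real.norm_eq_abs, _root_.abs_of_nonneg (by nlinarith)]
    have htri := norm_add_le (z * (1 - w * (starRingEnd ℂ) w))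
      (w * (1 - z * (starRingEnd ℂ) z))
    rw [hX, hY] at htri
    rw [hid]
    have key : a * (1 - b^2) + b * (1 - a^2) < 1 - (a*b)^2 := by
      nlinarith [mul_pos (mul_pos (sub_pos.2 hz) (sub_pos.2 hw))
        (sub_pos.2 (show a * b < 1 by nlinarith))]
    calc ‖z * (1 - w * (starRingEnd ℂ) w) + w * (1 - z * (starRingEnd ℂ) z)‖
        ≤ a * (1 - b^2) + b * (1 - a^2) := htri
      _ < 1 - (a*b)^2 := key
      _ = 1 - δ^2 := by rw [hab]
end

section
/- Let H be a Hilbert space, T a bounded operator on H, δ ∈ (0,1), and suppose A and Y are contractions on H with A self-adjoint, and T = 2√δ·A + (1-δ)·√(1+A)·Y·√(1-A). Then the numerical range W(T) = {⟨Tv, v⟩ : ‖v‖ = 1} is contained in the closed elliptical set K_δ = {x+iy : x²/(1+δ)² + y²/(1-δ)² ≤ 1}. -/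
set_option synthInstance.maxHeartbeats 1000000
set_option maxHeartbeats 1000000

/-- A self-adjoint contraction `A` satisfies `0 ≤ 1 + A`. -/
lemma one_add_nonneg_of_contraction
    {H : Type*} [NormedAddCommGroup H] [InnerProductSpace ℂ H] [CompleteSpace H]
    (A : H →L[ℂ] H) (hA : ‖A‖ ≤ 1) (hAsa : IsSelfAdjoint A) :
    (0 : H →L[ℂ] H) ≤ 1 + A := by
  rw [ContinuousLinearMap.nonneg_iff_isPositive]
  refine ⟨ContinuousLinearMap.isSelfAdjoint_iff_isSymmetric.mp ((IsSelfAdjoint.one (H →L[ℂ] H)).add hAsa), fun x => ?_⟩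
  have h1 : |RCLike.re (inner ℂ (A x) x : ℂ)| ≤ ‖x‖ ^ 2 := by
    calc |RCLike.re (inner ℂ (A x) x : ℂ)| ≤ ‖(inner ℂ (A x) x : ℂ)‖ := RCLike.abs_re_le_norm _
      _ ≤ ‖A x‖ * ‖x‖ := norm_inner_le_norm _ _
      _ ≤ (‖A‖ * ‖x‖) * ‖x‖ := by
          gcongr; exact A.le_opNorm x
      _ ≤ (1 * ‖x‖) * ‖x‖ := by gcongr
      _ = ‖x‖ ^ 2 := by ring
  have h2 : RCLike.re (inner ℂ ((1 + A) x) x : ℂ) = ‖x‖ ^ 2 + RCLike.re (inner ℂ (A x) x : ℂ) := by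
    rw [ContinuousLinearMap.add_apply, inner_add_left, map_add,
      ContinuousLinearMap.one_apply, inner_self_eq_norm_sq]
  have := abs_le.mp h1
  simp only [ContinuousLinearMap.reApplyInnerSelf_apply]
  rw [h2]
  linarith [this.1]

/-- If `A` and `Y` are contractions with `A` self-adjoint, and
`T = 2√δ A + (1-δ) √(1+A) Y √(1-A)`, then the numerical range of `T` is contained
in the closed elliptical set `K_δ`. -/
theorem numericalRange_subset_Kdelta_of_Ando_form
    {H : Type*} [NormedAddCommGroup H] [InnerProductSpace ℂ H] [CompleteSpace H]
    (δ : ℝ) (hδ0 : 0 < δ) (hδ1 : δ < 1) (A Y T : H →L[ℂ] H)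
    (hA : ‖A‖ ≤ 1) (hY : ‖Y‖ ≤ 1) (hAsa : IsSelfAdjoint A)
    (hT : T = (2 * Real.sqrt δ : ℝ) • A +
      (1 - δ : ℝ) • (CFC.sqrt (1 + A) * Y * CFC.sqrt (1 - A))) :
    ∀ v : H, ‖v‖ = 1 →
      (inner ℂ (T v) v : ℂ) ∈
        {c : ℂ | c.re ^ 2 / (1 + δ) ^ 2 + c.im ^ 2 / (1 - δ) ^ 2 ≤ 1} := by
  intro v hv
  have hAsym := ContinuousLinearMap.isSelfAdjoint_iff_isSymmetric.mp hAsa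
  -- the real number a = ⟪A v, v⟫
  set a : ℝ := (inner ℂ (A v) v : ℂ).re with ha_def
  have hAv : (inner ℂ (A v) v : ℂ) = (a : ℂ) := by
    have := hAsym.coe_reApplyInnerSelf_apply v
    rw [ContinuousLinearMap.reApplyInnerSelf_apply] at this
    exact this.symm
  have ha1 : |a| ≤ 1 := by
    calc |a| ≤ ‖(inner ℂ (A v) v : ℂ)‖ := by
          rw [hAv]; simp
      _ ≤ ‖A v‖ * ‖v‖ := norm_inner_le_norm _ _
      _ ≤ (‖A‖ * ‖v‖) * ‖v‖ := by gcongr; exact A.le_opNorm v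
      _ ≤ 1 := by rw [hv]; simpa using hA
  -- positivity facts
  have hP : (0 : H →L[ℂ] H) ≤ 1 + A := one_add_nonneg_of_contraction A hA hAsa
  have hQ : (0 : H →L[ℂ] H) ≤ 1 - A := by
    have := one_add_nonneg_of_contraction (-A) (by simpa using hA) hAsa.neg
    simpa [sub_eq_add_neg] using this
  set sP : H →L[ℂ] H := CFC.sqrt (1 + A) with hsP_def
  set sQ : H →L[ℂ] H := CFC.sqrt (1 - A) with hsQ_def
  have hsP_nn : (0 : H →L[ℂ] H) ≤ sP := CFC.sqrt_nonneg _
  have hsQ_nn : (0 : H →L[ℂ] H) ≤ sQ := CFC.sqrt_nonneg _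
  have hsP_sa : IsSelfAdjoint sP :=
    ((ContinuousLinearMap.nonneg_iff_isPositive sP).mp hsP_nn).isSelfAdjoint
  have hsQ_sa : IsSelfAdjoint sQ :=
    ((ContinuousLinearMap.nonneg_iff_isPositive sQ).mp hsQ_nn).isSelfAdjoint
  have hsPsym := ContinuousLinearMap.isSelfAdjoint_iff_isSymmetric.mp hsP_sa
  have hsQsym := ContinuousLinearMap.isSelfAdjoint_iff_isSymmetric.mp hsQ_sa
  have hP2 : sP * sP = 1 + A := CFC.sqrt_mul_sqrt_self _ hP
  have hQ2 : sQ * sQ = 1 - A := CFC.sqrt_mul_sqrt_self _ hQ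
  -- norms of sP v and sQ v
  have hnormP : ‖sP v‖ ^ 2 = 1 + a := by
    have h1 : (inner ℂ (sP v) (sP v) : ℂ) = inner ℂ ((1 + A) v) v := by
      have key : (inner ℂ (sP (sP v)) v : ℂ) = inner ℂ (sP v) (sP v) := hsPsym (sP v) v
      rw [← key, show sP (sP v) = (1 + A) v from by
        rw [← ContinuousLinearMap.mul_apply, hP2]]
    have h2 : (inner ℂ (sP v) (sP v) : ℂ) = (‖sP v‖ ^ 2 : ℝ) := by
      rw [inner_self_eq_norm_sq_to_K]; norm_num
    have h3 : (inner ℂ ((1 + A) v) v : ℂ) = 1 + a := by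
      simp [ContinuousLinearMap.add_apply, inner_add_left, hAv,
        inner_self_eq_norm_sq_to_K, hv]
    rw [h2, h3] at h1
    exact_mod_cast h1
  have hnormQ : ‖sQ v‖ ^ 2 = 1 - a := by
    have h1 : (inner ℂ (sQ v) (sQ v) : ℂ) = inner ℂ ((1 - A) v) v := by
      have key : (inner ℂ (sQ (sQ v)) v : ℂ) = inner ℂ (sQ v) (sQ v) := hsQsym (sQ v) v
      rw [← key, show sQ (sQ v) = (1 - A) v from by
        rw [← ContinuousLinearMap.mul_apply, hQ2]]
    have h2 : (inner ℂ (sQ v) (sQ v) : ℂ) = (‖sQ v‖ ^ 2 : ℝ) := by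
      rw [inner_self_eq_norm_sq_to_K]; norm_num
    have h3 : (inner ℂ ((1 - A) v) v : ℂ) = 1 - a := by
      simp [ContinuousLinearMap.sub_apply, inner_sub_left, hAv,
        inner_self_eq_norm_sq_to_K, hv]
    rw [h2, h3] at h1
    exact_mod_cast h1
  -- the cross term
  set z : ℂ := inner ℂ (Y (sQ v)) (sP v) with hz_def
  have hz_eq : (inner ℂ ((sP * Y * sQ) v) v : ℂ) = z := by
    have h1 : (inner ℂ (sP (Y (sQ v))) v : ℂ) = inner ℂ (Y (sQ v)) (sP v) :=
      hsPsym (Y (sQ v)) v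
    exact h1
  have hz_bound : z.re ^ 2 + z.im ^ 2 ≤ (1 - a) * (1 + a) := by
    have h1 : ‖z‖ ≤ ‖sQ v‖ * ‖sP v‖ := by
      calc ‖z‖ ≤ ‖Y (sQ v)‖ * ‖sP v‖ := norm_inner_le_norm _ _
        _ ≤ (‖Y‖ * ‖sQ v‖) * ‖sP v‖ := by gcongr; exact Y.le_opNorm _
        _ ≤ (1 * ‖sQ v‖) * ‖sP v‖ := by gcongr
        _ = ‖sQ v‖ * ‖sP v‖ := by ring
    have h2 : ‖z‖ ^ 2 ≤ (‖sQ v‖ * ‖sP v‖) ^ 2 := by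
      have := norm_nonneg z
      nlinarith [norm_nonneg (sQ v), norm_nonneg (sP v)]
    have h3 : ‖z‖ ^ 2 = z.re ^ 2 + z.im ^ 2 := by
      rw [Complex.sq_norm, Complex.normSq_apply]; ring
    calc z.re ^ 2 + z.im ^ 2 = ‖z‖ ^ 2 := h3.symm
      _ ≤ (‖sQ v‖ * ‖sP v‖) ^ 2 := h2
      _ = ‖sQ v‖ ^ 2 * ‖sP v‖ ^ 2 := by ring
      _ = (1 - a) * (1 + a) := by rw [hnormP, hnormQ]
  -- the value of the inner product
  set s : ℝ := Real.sqrt δ with hs_def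
  have hs2 : s ^ 2 = δ := Real.sq_sqrt hδ0.le
  have hs_nn : 0 ≤ s := Real.sqrt_nonneg δ
  have hc : (inner ℂ (T v) v : ℂ) = ((2 * s : ℝ) : ℂ) * (a : ℂ) + ((1 - δ : ℝ) : ℂ) * z := by
    rw [hT]
    simp only [ContinuousLinearMap.add_apply, ContinuousLinearMap.coe_smul',
      Pi.smul_apply, inner_add_left, RCLike.real_smul_eq_coe_smul (K := ℂ),
      inner_smul_left, Complex.conj_ofReal]
    rw [hAv, hz_eq]; simp [RCLike.conj_ofReal, map_ofNat]
  rw [Set.mem_setOf_eq, hc]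
  have hre : (((2 * s : ℝ) : ℂ) * (a : ℂ) + ((1 - δ : ℝ) : ℂ) * z).re
      = 2 * s * a + (1 - δ) * z.re := by
    simp [Complex.add_re, Complex.mul_re]
  have him : (((2 * s : ℝ) : ℂ) * (a : ℂ) + ((1 - δ : ℝ) : ℂ) * z).im
      = (1 - δ) * z.im := by
    simp [Complex.add_im, Complex.mul_im]
  rw [hre, him]
  have h1δ : (0 : ℝ) < 1 + δ := by linarith
  have h2δ : (0 : ℝ) < 1 - δ := by linarith
  rw [div_add_div _ _ (by positivity) (by positivity), div_le_one (by positivity)]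
  have key1 : (2 * s * a + (1 - δ) * z.re) ^ 2 ≤ (1 + δ) ^ 2 * (a ^ 2 + z.re ^ 2) := by
    nlinarith [sq_nonneg ((1 - δ) * a - 2 * s * z.re), hs2]
  have key3 : a ^ 2 + z.re ^ 2 + z.im ^ 2 ≤ 1 := by nlinarith [hz_bound]
  nlinarith [mul_le_mul_of_nonneg_right key1 (sq_nonneg (1 - δ)),
    mul_le_mul_of_nonneg_left key3
      (by positivity : (0:ℝ) ≤ (1 + δ) ^ 2 * (1 - δ) ^ 2)]
end

section
/- Let δ ∈ (0,1), t ∈ [-2√δ, 2√δ], and z ∈ ℂ with |z| ≤ (1-δ)√(1 - t²/(4δ)). Then t + z belongs to the closed elliptical set K_δ = {x+iy : x²/(1+δ)² + y²/(1-δ)² ≤ 1}. -/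
/-- If `δ ∈ (0,1)`, `t ∈ [-2√δ, 2√δ]` and `|z| ≤ (1-δ)√(1 - t²/(4δ))`, then
`t + z ∈ K_δ`. -/
theorem add_mem_Kdelta_of_abs_le (δ t : ℝ) (hδ0 : 0 < δ) (hδ1 : δ < 1)
    (ht : t ∈ Set.Icc (-(2 * Real.sqrt δ)) (2 * Real.sqrt δ)) (z : ℂ)
    (hz : ‖z‖ ≤ (1 - δ) * Real.sqrt (1 - t ^ 2 / (4 * δ))) :
    (t : ℂ) + z ∈ {c : ℂ | c.re ^ 2 / (1 + δ) ^ 2 + c.im ^ 2 / (1 - δ) ^ 2 ≤ 1} := by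
  obtain ⟨ht1, ht2⟩ := ht
  have hsq : Real.sqrt δ ^ 2 = δ := Real.sq_sqrt hδ0.le
  have ht4 : t ^ 2 ≤ 4 * δ := by nlinarith [Real.sqrt_nonneg δ]
  have hs : 0 ≤ 1 - t ^ 2 / (4 * δ) := by
    rw [sub_nonneg, div_le_one (by linarith)]; exact ht4
  set x := z.re
  set y := z.im
  have hxy : x ^ 2 + y ^ 2 = ‖z‖ ^ 2 := by
    rw [Complex.sq_norm, Complex.normSq_apply]; ring
  have hr : x ^ 2 + y ^ 2 ≤ (1 - δ) ^ 2 * (1 - t ^ 2 / (4 * δ)) := by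
    rw [hxy]
    calc ‖z‖ ^ 2 ≤ ((1 - δ) * Real.sqrt (1 - t ^ 2 / (4 * δ))) ^ 2 :=
          pow_le_pow_left₀ (norm_nonneg z) hz 2
      _ = (1 - δ) ^ 2 * (1 - t ^ 2 / (4 * δ)) := by
          rw [mul_pow, Real.sq_sqrt hs]
  have hr' : 4 * δ * (x ^ 2 + y ^ 2) ≤ (1 - δ) ^ 2 * (4 * δ - t ^ 2) := by
    have h4 : (0:ℝ) < 4 * δ := by linarith
    have := mul_le_mul_of_nonneg_left hr h4.le
    have he : (1 - δ) ^ 2 * (1 - t ^ 2 / (4 * δ)) * (4 * δ) = (1 - δ) ^ 2 * (4 * δ - t ^ 2) := by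
      field_simp
    nlinarith [this]
  simp only [Set.mem_setOf_eq, Complex.add_re, Complex.add_im, Complex.ofReal_re,
    Complex.ofReal_im]
  have h1 : (0:ℝ) < (1 + δ) ^ 2 := pow_pos (by linarith) 2
  have h2 : (0:ℝ) < (1 - δ) ^ 2 := pow_pos (by linarith) 2
  rw [div_add_div _ _ (ne_of_gt h1) (ne_of_gt h2), div_le_one (mul_pos h1 h2)]
  nlinarith [sq_nonneg ((1 - δ) ^ 2 * t - 4 * δ * x), hr', sq_nonneg (1 - δ), sq_nonneg (1 + δ), mul_le_mul_of_nonneg_left hr' (le_of_lt h1)]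
end

section
/- Let δ ∈ (0,1) and t ∈ [-4δ/(1+δ), 4δ/(1+δ)]. Then the closed disc centered at t of radius (1-δ)√(1 - t²/(4δ)) is contained in K_δ = {x+iy : x²/(1+δ)² + y²/(1-δ)² ≤ 1}. -/
/-- If `δ ∈ (0,1)` and `t ∈ [-4δ/(1+δ), 4δ/(1+δ)]`, then the closed disc centred at `t`
of radius `(1-δ)√(1 - t²/(4δ))` is contained in `K_δ`. -/
theorem closedBall_subset_Kdelta_of_central (δ t : ℝ) (hδ0 : 0 < δ) (hδ1 : δ < 1)
    (ht : t ∈ Set.Icc (-(4 * δ / (1 + δ))) (4 * δ / (1 + δ))) :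
    Metric.closedBall (t : ℂ) ((1 - δ) * Real.sqrt (1 - t ^ 2 / (4 * δ))) ⊆
      {c : ℂ | c.re ^ 2 / (1 + δ) ^ 2 + c.im ^ 2 / (1 - δ) ^ 2 ≤ 1} := by
  obtain ⟨ht1, ht2⟩ := ht
  have hδp : (0:ℝ) < 1 + δ := by linarith
  have hδm : (0:ℝ) < 1 - δ := by linarith
  have htb : t ^ 2 ≤ (4 * δ / (1 + δ)) ^ 2 := sq_le_sq' ht1 ht2
  have htb' : t ^ 2 ≤ 4 * δ := by
    rw [div_pow] at htb
    rw [le_div_iff₀ (by positivity)] at htb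
    nlinarith [sq_nonneg (1 - δ), sq_nonneg (1 + δ)]
  have hnn : (0:ℝ) ≤ 1 - t ^ 2 / (4 * δ) := by
    rw [sub_nonneg, div_le_one (by positivity)]; exact htb'
  intro z hz
  simp only [Metric.mem_closedBall] at hz
  have hzre : z.re - t = (z - t).re := by simp
  have hzim : z.im = (z - t).im := by simp
  have hd : (z.re - t) ^ 2 + z.im ^ 2 ≤ ((1 - δ) * Real.sqrt (1 - t ^ 2 / (4 * δ))) ^ 2 := by
    rw [hzre, hzim]
    have habs : ‖z - t‖ ≤ (1 - δ) * Real.sqrt (1 - t ^ 2 / (4 * δ)) := by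
      rw [← Complex.dist_eq]; exact hz
    calc (z - t).re ^ 2 + (z - t).im ^ 2 = ‖z - t‖ ^ 2 := by
          rw [Complex.sq_norm, Complex.normSq_apply]; ring
      _ ≤ _ := by
          apply sq_le_sq' _ habs
          have := norm_nonneg (z - t)
          nlinarith [Real.sqrt_nonneg (1 - t ^ 2 / (4 * δ))]
  rw [mul_pow, Real.sq_sqrt hnn] at hd
  have hd' : (z.re - t) ^ 2 + z.im ^ 2 ≤ (1 - δ) ^ 2 * (1 - t ^ 2 / (4 * δ)) := hd
  show z.re ^ 2 / (1 + δ) ^ 2 + z.im ^ 2 / (1 - δ) ^ 2 ≤ 1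
  rw [div_add_div _ _ (by positivity) (by positivity), div_le_one (by positivity)]
  have key : 0 ≤ (4 * δ * z.re - (1 + δ) ^ 2 * t) ^ 2 := sq_nonneg _
  have h4δ : (0:ℝ) < 4 * δ := by linarith
  have hdm : (1 - δ) ^ 2 * (1 - t ^ 2 / (4 * δ)) * (4 * δ) =
      (1 - δ) ^ 2 * (4 * δ) - (1 - δ) ^ 2 * t ^ 2 := by
    field_simp
  nlinarith [mul_le_mul_of_nonneg_left hd' (le_of_lt (mul_pos h4δ (mul_pos hδp hδp)))]
end

section
/- Let δ ∈ (0,1) and t ∈ ℝ with 4δ/(1+δ) ≤ |t| ≤ 1+δ. Then the closed disc centered at t of radius 1+δ-|t| is contained in K_δ = {x+iy : x²/(1+δ)² + y²/(1-δ)² ≤ 1}. -/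
/-- If `δ ∈ (0,1)` and `4δ/(1+δ) ≤ |t| ≤ 1+δ`, then the closed disc centred at `t` of
radius `1 + δ - |t|` is contained in `K_δ`. -/
theorem closedBall_subset_Kdelta_of_peripheral (δ t : ℝ) (hδ0 : 0 < δ) (hδ1 : δ < 1)
    (ht1 : 4 * δ / (1 + δ) ≤ |t|) (ht2 : |t| ≤ 1 + δ) :
    Metric.closedBall (t : ℂ) (1 + δ - |t|) ⊆
      {c : ℂ | c.re ^ 2 / (1 + δ) ^ 2 + c.im ^ 2 / (1 - δ) ^ 2 ≤ 1} := by
  intro z hz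
  have ha : (0:ℝ) < 1 + δ := by linarith
  have hb : (0:ℝ) < 1 - δ := by linarith
  have hr : 0 ≤ 1 + δ - |t| := by linarith
  have hzd : dist z (t : ℂ) ≤ 1 + δ - |t| := Metric.mem_closedBall.mp hz
  rw [Complex.dist_eq] at hzd
  have hkey : (z.re - t)^2 + z.im^2 ≤ (1 + δ - |t|)^2 := by
    have h2 : ‖z - t‖ ^ 2 ≤ (1 + δ - |t|)^2 :=
      pow_le_pow_left₀ (norm_nonneg _) hzd 2
    rw [Complex.sq_norm, Complex.normSq_apply] at h2
    simpa [Complex.sub_re, Complex.sub_im, sq] using h2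
  have ht : 4 * δ ≤ |t| * (1 + δ) := (div_le_iff₀ ha).mp ht1
  show z.re ^ 2 / (1 + δ) ^ 2 + z.im ^ 2 / (1 - δ) ^ 2 ≤ 1
  rw [div_add_div _ _ (by positivity) (by positivity), div_le_one (by positivity)]
  have h3 : (1+δ)^2 * ((z.re - t)^2 + z.im^2) ≤ (1+δ)^2 * (1 + δ - |t|)^2 :=
    mul_le_mul_of_nonneg_left hkey (by positivity)
  rcases abs_cases t with ⟨hts, htpos⟩ | ⟨hts, htneg⟩
  · rw [hts] at hkey ht h3
    have hx : z.re ≤ 1 + δ := by nlinarith [sq_nonneg z.im, sq_nonneg (z.re - t - (1 + δ - t))]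
    have hf2 : 4 * δ * (z.re + (1+δ)) ≤ 2 * (1+δ)^2 * t := by nlinarith
    have h1 : 0 ≤ ((1+δ) - z.re) * (2*(1+δ)^2*t - 4*δ*(z.re + (1+δ))) :=
      mul_nonneg (by linarith) (by linarith)
    nlinarith [h3, h1]
  · rw [hts] at hkey ht h3
    have hx : -(1 + δ) ≤ z.re := by nlinarith [sq_nonneg z.im, sq_nonneg (z.re - t + (1 + δ + t))]
    have hf2 : 4 * δ * ((1+δ) - z.re) ≤ 2 * (1+δ)^2 * (-t) := by nlinarith
    have h1 : 0 ≤ ((1+δ) + z.re) * (2*(1+δ)^2*(-t) - 4*δ*((1+δ) - z.re)) :=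
      mul_nonneg (by linarith) (by linarith)
    nlinarith [h3, h1]
end

section
/- Let δ ∈ (0,1), H a Hilbert space, and X a bounded invertible operator on H with ‖X‖ ≤ 1 and ‖X⁻¹‖ ≤ 1/δ. Let Q = X - δX⁻¹ and T = X + δX⁻¹. Then Q commutes with T, Q² = T² - 4δ, and the block operator Z = (1/2)[[T,Q],[Q,T]] on H ⊕ H satisfies ‖Z‖ ≤ 1. -/
private lemma dp_aux {H : Type*} [NormedAddCommGroup H] [InnerProductSpace ℂ H]
    (a b x y : H) (hx : ‖x‖ ≤ ‖a + b‖) (hy : ‖y‖ ≤ ‖a - b‖) :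
    ‖(2 : ℂ)⁻¹ • (x + y)‖ ^ 2 + ‖(2 : ℂ)⁻¹ • (x - y)‖ ^ 2 ≤ ‖a‖ ^ 2 + ‖b‖ ^ 2 := by
  have h2 : ‖(2 : ℂ)⁻¹‖ = 2⁻¹ := by
    rw [norm_inv]
    norm_num
  rw [norm_smul, norm_smul, h2]
  have hpar : ‖x + y‖ ^ 2 + ‖x - y‖ ^ 2 = 2 * (‖x‖ ^ 2 + ‖y‖ ^ 2) := by
    have := parallelogram_law_with_norm ℂ x y
    nlinarith
  have hpar2 : ‖a + b‖ ^ 2 + ‖a - b‖ ^ 2 = 2 * (‖a‖ ^ 2 + ‖b‖ ^ 2) := by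
    have := parallelogram_law_with_norm ℂ a b
    nlinarith
  nlinarith [norm_nonneg x, norm_nonneg y, norm_nonneg (a + b), norm_nonneg (a - b)]

set_option maxHeartbeats 1000000 in
/-- If `X` is a Douglas-Paulsen operator with parameter `δ` (`‖X‖ ≤ 1`, `‖X⁻¹‖ ≤ 1/δ`),
`Q = X - δX⁻¹`, `T = X + δX⁻¹`, then `Q` commutes with `T`, `Q² = T² - 4δ`, and the block
operator `Z = (1/2)[[T,Q],[Q,T]]` on `H ⊕ H` is a contraction. -/
theorem douglasPaulsen_Z_contraction
    {H : Type*} [NormedAddCommGroup H] [InnerProductSpace ℂ H]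
    (δ : ℝ) (hδ0 : 0 < δ) (hδ1 : δ < 1) (X Y : H →L[ℂ] H)
    (hXY : X * Y = 1) (hYX : Y * X = 1) (hXn : ‖X‖ ≤ 1) (hYn : ‖Y‖ ≤ 1 / δ)
    (Z : WithLp 2 (H × H) →L[ℂ] WithLp 2 (H × H))
    (hZ : ∀ p : WithLp 2 (H × H),
      WithLp.equiv 2 (H × H) (Z p) =
        ((2 : ℂ)⁻¹ • ((X + (δ : ℂ) • Y) ((WithLp.equiv 2 (H × H) p).1) +
            (X - (δ : ℂ) • Y) ((WithLp.equiv 2 (H × H) p).2)),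
          (2 : ℂ)⁻¹ • ((X - (δ : ℂ) • Y) ((WithLp.equiv 2 (H × H) p).1) +
            (X + (δ : ℂ) • Y) ((WithLp.equiv 2 (H × H) p).2)))) :
    (X - (δ : ℂ) • Y) * (X + (δ : ℂ) • Y) = (X + (δ : ℂ) • Y) * (X - (δ : ℂ) • Y) ∧
      (X - (δ : ℂ) • Y) ^ 2 = (X + (δ : ℂ) • Y) ^ 2 - (4 * δ : ℂ) • 1 ∧
      ‖Z‖ ≤ 1 := by
  refine ⟨?_, ?_, ?_⟩
  · simp only [mul_add, add_mul, sub_mul, mul_sub, smul_mul_assoc, mul_smul_comm, hXY, hYX,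
      smul_smul]
    module
  · simp only [sq, mul_add, add_mul, sub_mul, mul_sub, smul_mul_assoc, mul_smul_comm, hXY, hYX,
      smul_smul]
    module
  · have hdY : ∀ x : H, ‖((δ : ℂ) • Y) x‖ ≤ ‖x‖ := by
      intro x
      rw [ContinuousLinearMap.smul_apply, norm_smul, Complex.norm_real,
        Real.norm_of_nonneg hδ0.le]
      calc δ * ‖Y x‖ ≤ δ * (‖Y‖ * ‖x‖) := by
            have := Y.le_opNorm x
            nlinarith [norm_nonneg (Y x)]
        _ ≤ δ * ((1 / δ) * ‖x‖) := by
            have := norm_nonneg x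
            nlinarith [mul_le_mul_of_nonneg_right hYn (norm_nonneg x)]
        _ = ‖x‖ := by field_simp
    have hX : ∀ x : H, ‖X x‖ ≤ ‖x‖ := fun x =>
      (X.le_opNorm x).trans (by nlinarith [norm_nonneg x])
    refine Z.opNorm_le_bound zero_le_one fun p => ?_
    rw [one_mul]
    set a := (WithLp.equiv 2 (H × H) p).1 with ha
    set b := (WithLp.equiv 2 (H × H) p).2 with hb
    have hsq : ‖Z p‖ ^ 2 ≤ ‖p‖ ^ 2 := by
      rw [WithLp.prod_norm_sq_eq_of_L2, WithLp.prod_norm_sq_eq_of_L2]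
      have h1 : (Z p).fst = (2 : ℂ)⁻¹ • (X (a + b) + ((δ : ℂ) • Y) (a - b)) := by
        show (WithLp.equiv 2 (H × H) (Z p)).1 = _
        rw [hZ p]
        simp only [ContinuousLinearMap.add_apply, ContinuousLinearMap.sub_apply, map_add,
          map_sub, ContinuousLinearMap.smul_apply, ← ha, ← hb]
        module
      have h2 : (Z p).snd = (2 : ℂ)⁻¹ • (X (a + b) - ((δ : ℂ) • Y) (a - b)) := by
        show (WithLp.equiv 2 (H × H) (Z p)).2 = _
        rw [hZ p]
        simp only [ContinuousLinearMap.add_apply, ContinuousLinearMap.sub_apply, map_add,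
          map_sub, ContinuousLinearMap.smul_apply, ← ha, ← hb]
        module
      have hp1 : p.fst = a := rfl
      have hp2 : p.snd = b := rfl
      rw [h1, h2, hp1, hp2]
      exact dp_aux a b _ _ (hX _) (hdY _)
    nlinarith [norm_nonneg (Z p), norm_nonneg p]
end

section
/- Let U be an operator on a Hilbert space K with ‖U‖ ≤ 1, and let H be a closed subspace of K with orthogonal projection P. Suppose T is an operator on H such that Tⁿ = P·Uⁿ|_H for all positive integers n (U is a power dilation of T). Then the smallest closed U-invariant subspace M containing H has the property that M ⊖ H is U-invariant; consequently H is a semi-invariant subspace for U. -/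
/-- Sarason's lemma: if the contraction `U` on `K` is a power dilation of `T` on the closed
subspace `H`, then the smallest closed `U`-invariant subspace `M` containing `H` is such
that `M ⊖ H = M ⊓ Hᗮ` is `U`-invariant; consequently `H` is semi-invariant for `U`. -/
theorem sarason_semiinvariant
    {K : Type*} [NormedAddCommGroup K] [InnerProductSpace ℂ K] [CompleteSpace K]
    (U : K →L[ℂ] K) (hU : ‖U‖ ≤ 1) (H : Submodule ℂ K) [CompleteSpace H]
    (T : H →L[ℂ] H)
    (hdil : ∀ (x : H) (n : ℕ), 1 ≤ n →
      H.orthogonalProjection ((U ^ n) (x : K)) = (T ^ n) x) :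
    (∀ x ∈ (Submodule.span ℂ
          (⋃ n : ℕ, (fun y : K => (U ^ n) y) '' (H : Set K))).topologicalClosure ⊓ Hᗮ,
        U x ∈ (Submodule.span ℂ
          (⋃ n : ℕ, (fun y : K => (U ^ n) y) '' (H : Set K))).topologicalClosure ⊓ Hᗮ) ∧
      ∃ M₁ M₂ : Submodule ℂ K, IsClosed (M₁ : Set K) ∧ IsClosed (M₂ : Set K) ∧
        (∀ x ∈ M₁, U x ∈ M₁) ∧ (∀ x ∈ M₂, U x ∈ M₂) ∧ H = M₂ ⊓ M₁ᗮ := by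
  set S : Set K := ⋃ n : ℕ, (fun y : K => (U ^ n) y) '' (H : Set K) with hS
  set M : Submodule ℂ K := (Submodule.span ℂ S).topologicalClosure with hM
  -- H ≤ M
  have hHS : (H : Set K) ⊆ S := by
    intro x hx
    exact Set.mem_iUnion.2 ⟨0, ⟨x, hx, by simp⟩⟩
  have hHM : H ≤ M := fun x hx =>
    Submodule.le_topologicalClosure _ (Submodule.subset_span (hHS hx))
  have hMclosed : IsClosed (M : Set K) := Submodule.isClosed_topologicalClosure _
  -- U-invariance of M
  have hSU : S ⊆ ((M.comap (U : K →ₗ[ℂ] K) : Submodule ℂ K) : Set K) := by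
    intro x hx
    rcases Set.mem_iUnion.1 hx with ⟨n, y, hy, rfl⟩
    show U ((U ^ n) y) ∈ M
    have key1 : U ((U ^ n) y) = (U ^ (n + 1)) y := by
      rw [pow_succ', ContinuousLinearMap.mul_apply]
    rw [key1]
    exact Submodule.le_topologicalClosure _
      (Submodule.subset_span (Set.mem_iUnion.2 ⟨n + 1, ⟨y, hy, rfl⟩⟩))
  have hMU : ∀ x ∈ M, U x ∈ M := by
    have h1 : Submodule.span ℂ S ≤ M.comap (U : K →ₗ[ℂ] K) := Submodule.span_le.2 hSU
    have h2 : IsClosed ((M.comap (U : K →ₗ[ℂ] K)) : Set K) := hMclosed.preimage U.continuous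
    exact fun x hx => (Submodule.topologicalClosure_minimal _ h1 h2) hx
  -- P Uⁿ h = Tⁿ h for all n (including n = 0)
  have hproj : ∀ (h : H) (n : ℕ),
      H.orthogonalProjection ((U ^ n) (h : K)) = (T ^ n) h := by
    intro h n
    rcases Nat.eq_zero_or_pos n with rfl | hn
    · simp
    · exact hdil h n hn
  -- intertwining: P ∘ U = T ∘ P on M
  set D : K →L[ℂ] H :=
    (H.orthogonalProjection).comp U - T.comp (H.orthogonalProjection) with hD
  have hSD : S ⊆ ((LinearMap.ker (D : K →ₗ[ℂ] H) : Submodule ℂ K) : Set K) := by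
    intro x hx
    obtain ⟨n, y, hy, rfl⟩ := Set.mem_iUnion.1 hx
    set z : H := ⟨y, hy⟩ with hz
    have hzy : (z : K) = y := rfl
    show D ((U ^ n) y) = 0
    have : D ((U ^ n) y) =
        H.orthogonalProjection (U ((U ^ n) y)) -
          T (H.orthogonalProjection ((U ^ n) y)) := by
      simp [hD]
    rw [this, ← hzy]
    have key1 : U ((U ^ n) (z : K)) = (U ^ (n + 1)) (z : K) := by
      rw [pow_succ', ContinuousLinearMap.mul_apply]
    rw [key1, hproj z (n + 1), hproj z n, pow_succ',
      ContinuousLinearMap.mul_apply, sub_self]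
  have hMD : ∀ x ∈ M, H.orthogonalProjection (U x) = T (H.orthogonalProjection x) := by
    have h1 : Submodule.span ℂ S ≤ LinearMap.ker (D : K →ₗ[ℂ] H) := Submodule.span_le.2 hSD
    have h2 : IsClosed ((LinearMap.ker (D : K →ₗ[ℂ] H) : Submodule ℂ K) : Set K) :=
      isClosed_singleton.preimage D.continuous
    intro x hx
    have hx0 : D x = 0 := (Submodule.topologicalClosure_minimal _ h1 h2) hx
    have : H.orthogonalProjection (U x) - T (H.orthogonalProjection x) = 0 := by
      simpa [hD] using hx0
    exact sub_eq_zero.1 this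
  -- Claim 1
  have claim1 : ∀ x ∈ M ⊓ Hᗮ, U x ∈ M ⊓ Hᗮ := by
    intro x hx
    rcases Submodule.mem_inf.1 hx with ⟨hxM, hxH⟩
    refine Submodule.mem_inf.2 ⟨hMU x hxM, ?_⟩
    have hPx : H.orthogonalProjection x = 0 :=
      Submodule.orthogonalProjectionOnto_apply_of_mem_orthogonal hxH
    have hPUx : H.orthogonalProjection (U x) = 0 := by
      rw [hMD x hxM, hPx, map_zero]
    have h3 : U x - (H.orthogonalProjection (U x) : K) ∈ Hᗮ :=
      H.sub_starProjection_mem_orthogonal (U x)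
    rwa [hPUx, ZeroMemClass.coe_zero, sub_zero] at h3
  refine ⟨claim1, M ⊓ Hᗮ, M, ?_, hMclosed, claim1, hMU, ?_⟩
  · rw [Submodule.coe_inf]
    exact hMclosed.inter (Submodule.isClosed_orthogonal H)
  · -- H = M ⊓ (M ⊓ Hᗮ)ᗮ
    have hNle : M ⊓ Hᗮ ≤ Hᗮ := inf_le_right
    have hHNperp : H ≤ (M ⊓ Hᗮ)ᗮ :=
      le_trans (Submodule.le_orthogonal_orthogonal H) (Submodule.orthogonal_le hNle)
    refine le_antisymm (le_inf hHM hHNperp) ?_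
    intro x hx
    rcases Submodule.mem_inf.1 hx with ⟨hxM, hxN⟩
    have hyN : x - H.orthogonalProjection x ∈ M ⊓ Hᗮ :=
      Submodule.mem_inf.2 ⟨Submodule.sub_mem M hxM (hHM (H.orthogonalProjection x).2),
        H.sub_starProjection_mem_orthogonal x⟩
    have hyNperp : x - H.orthogonalProjection x ∈ (M ⊓ Hᗮ)ᗮ :=
      Submodule.sub_mem _ hxN (hHNperp (H.orthogonalProjection x).2)
    have hy0 : x - (H.orthogonalProjection x : K) = 0 :=
      (Submodule.orthogonal_disjoint (M ⊓ Hᗮ)).le_bot ⟨hyN, hyNperp⟩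
    rw [sub_eq_zero.1 hy0]
    exact (H.orthogonalProjection x).2
end

section
/- Let δ ∈ (0,1), let T be an operator on a Hilbert space H with spectrum contained in K_δ = {x+iy : x²/(1+δ)² + y²/(1-δ)² ≤ 1}, and define G(z) = z·f'(z)·(T - f(z))⁻¹ for z ∈ 𝔻 \ {0}, where f(z) = 1/z + δz. Then G extends analytically to the open unit disc with G(0) = 1, and for all z ∈ 𝔻, (1/2)(G(z) + 1) = (1 - (z/2)T)·(1 - zT + δz²)⁻¹. -/
lemma aux_inverse_eq {M : Type*} [MonoidWithZero M] {A C : M} (hA : IsUnit A) (h : C * A = 1) :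
    Ring.inverse A = C := by
  calc Ring.inverse A = C * A * Ring.inverse A := by rw [h, one_mul]
  _ = C * (A * Ring.inverse A) := mul_assoc _ _ _
  _ = C := by rw [Ring.mul_inverse_cancel A hA, mul_one]

lemma aux_key (δ x y s : ℝ) (hδ0 : 0 < δ) (hδ1 : δ < 1) (hs : s = x^2 + y^2)
    (hs0 : 0 < s) (hs1 : s < 1) :
    1 < (x/s + δ*x)^2/(1+δ)^2 + (-(y/s) + δ*y)^2/(1-δ)^2 := by
  subst hs
  have h1 : (0:ℝ) < 1+δ := by linarith
  have h2 : (0:ℝ) < 1-δ := by linarith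
  have hsne : x^2 + y^2 ≠ 0 := ne_of_gt hs0
  have ha : (x/(x^2+y^2) + δ*x)^2/(1+δ)^2
      = x^2*(1+δ*(x^2+y^2))^2/((x^2+y^2)^2*(1+δ)^2) := by
    field_simp
  have hb : (-(y/(x^2+y^2)) + δ*y)^2/(1-δ)^2
      = y^2*(1-δ*(x^2+y^2))^2/((x^2+y^2)^2*(1-δ)^2) := by
    field_simp; ring
  have k1 : 0 < 1 - (x^2+y^2) := by linarith
  have k2 : 0 < 1 - δ^2*(x^2+y^2) := by nlinarith
  have key : 0 < (1-(x^2+y^2))*(1-δ^2*(x^2+y^2)) := mul_pos k1 k2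
  have hpos : 0 < x^2*(1-δ)^2 + y^2*(1+δ)^2 := by
    nlinarith [mul_nonneg (sq_nonneg x) (sq_nonneg (1-δ)), mul_nonneg (sq_nonneg y) (sq_nonneg (1+δ)),
      mul_pos (mul_pos h2 h2) hs0, mul_nonneg (mul_nonneg (sq_nonneg y) hδ0.le) hδ0.le,
      mul_nonneg (sq_nonneg y) hδ0.le, mul_nonneg (sq_nonneg x) hδ0.le]
  have key2 : 0 < (1-(x^2+y^2))*(1-δ^2*(x^2+y^2))*(x^2*(1-δ)^2 + y^2*(1+δ)^2) :=
    mul_pos key hpos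
  rw [ha, hb, div_add_div _ _ (by positivity) (by positivity),
    lt_div_iff₀ (by positivity)]
  nlinarith [mul_pos (mul_pos hs0 hs0) key2, mul_pos hs0 key2, sq_nonneg x, sq_nonneg y]

/-- If `σ(T) ⊆ K_δ` and `G(z) = z f'(z) (T - f(z))⁻¹` with `f(z) = 1/z + δz`, then `G`
extends analytically to the unit disc with `G(0) = 1`, and
`(1/2)(G(z)+1) = (1 - (z/2)T)(1 - zT + δz²)⁻¹` for all `z ∈ 𝔻`. -/
theorem resolvent_function_extension
    {H : Type*} [NormedAddCommGroup H] [InnerProductSpace ℂ H] [CompleteSpace H]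
    (δ : ℝ) (hδ0 : 0 < δ) (hδ1 : δ < 1) (T : H →L[ℂ] H)
    (hσ : spectrum ℂ T ⊆
      {c : ℂ | c.re ^ 2 / (1 + δ) ^ 2 + c.im ^ 2 / (1 - δ) ^ 2 ≤ 1}) :
    ∃ G : ℂ → (H →L[ℂ] H),
      DifferentiableOn ℂ G (Metric.ball (0 : ℂ) 1) ∧ G 0 = 1 ∧
      (∀ z ∈ Metric.ball (0 : ℂ) 1, z ≠ 0 →
        IsUnit (T - (1 / z + (δ : ℂ) * z) • (1 : H →L[ℂ] H)) ∧
        G z = (z * (-(1 / z ^ 2) + (δ : ℂ))) •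
          Ring.inverse (T - (1 / z + (δ : ℂ) * z) • (1 : H →L[ℂ] H))) ∧
      (∀ z ∈ Metric.ball (0 : ℂ) 1,
        IsUnit ((1 : H →L[ℂ] H) - z • T + ((δ : ℂ) * z ^ 2) • (1 : H →L[ℂ] H)) ∧
        (2 : ℂ)⁻¹ • (G z + 1) =
          (1 - (z / 2) • T) *
            Ring.inverse ((1 : H →L[ℂ] H) - z • T + ((δ : ℂ) * z ^ 2) • (1 : H →L[ℂ] H))) := by
  classical
  -- notation
  set B : ℂ → (H →L[ℂ] H) :=
    fun z => (1 : H →L[ℂ] H) - z • T + ((δ : ℂ) * z ^ 2) • (1 : H →L[ℂ] H) with hBdef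
  -- Step 1: for z in the punctured disc, T - f(z) is a unit
  have hVunit : ∀ z ∈ Metric.ball (0 : ℂ) 1, z ≠ 0 →
      IsUnit (T - (1 / z + (δ : ℂ) * z) • (1 : H →L[ℂ] H)) := by
    intro z hz hz0
    set w : ℂ := 1 / z + (δ : ℂ) * z with hw
    set s : ℝ := Complex.normSq z with hsdef
    have hs0 : 0 < s := Complex.normSq_pos.mpr hz0
    have hs : s = z.re ^ 2 + z.im ^ 2 := by rw [hsdef, Complex.normSq_apply]; ring
    have hs1 : s < 1 := by
      rw [Metric.mem_ball, dist_zero_right] at hz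
      calc s = ‖z‖ ^ 2 := by rw [hsdef, Complex.normSq_eq_norm_sq]
      _ < 1 := by nlinarith [norm_nonneg z]
    have hwre : w.re = z.re / s + δ * z.re := by
      rw [hw]; simp [Complex.add_re, Complex.div_re, Complex.mul_re, hsdef]
    have hwim : w.im = -(z.im / s) + δ * z.im := by
      rw [hw]; simp [Complex.add_im, Complex.div_im, Complex.mul_im, hsdef]; ring
    have hnot : w ∉ spectrum ℂ T := by
      intro hmem
      have h := hσ hmem
      simp only [Set.mem_setOf_eq, hwre, hwim] at h
      linarith [aux_key δ z.re z.im s hδ0 hδ1 hs hs0 hs1]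
    have hU : IsUnit ((algebraMap ℂ (H →L[ℂ] H)) w - T) := spectrum.notMem_iff.mp hnot
    have he : T - w • (1 : H →L[ℂ] H) = -((algebraMap ℂ (H →L[ℂ] H)) w - T) := by
      rw [Algebra.algebraMap_eq_smul_one]; abel
    rw [he]
    exact hU.neg
  -- Step 2: B z factors through T - f(z) for z ≠ 0
  have hBfac : ∀ z : ℂ, z ≠ 0 →
      B z = ((-z) • (1 : H →L[ℂ] H)) * (T - (1 / z + (δ : ℂ) * z) • (1 : H →L[ℂ] H)) := by
    intro z hz0
    have hzw : z * (1 / z + (δ : ℂ) * z) = 1 + (δ : ℂ) * z ^ 2 := by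
      field_simp
    rw [hBdef, smul_mul_assoc, one_mul, smul_sub, smul_smul, neg_mul, hzw]
    module
  -- Step 3: B z is a unit on the ball
  have hBunit : ∀ z ∈ Metric.ball (0 : ℂ) 1, IsUnit (B z) := by
    intro z hz
    by_cases hz0 : z = 0
    · subst hz0
      have : B 0 = 1 := by simp [hBdef]
      rw [this]; exact isUnit_one
    · rw [hBfac z hz0]
      have h1 : IsUnit ((-z) • (1 : H →L[ℂ] H)) := by
        rw [← Algebra.algebraMap_eq_smul_one]
        exact (isUnit_iff_ne_zero.mpr (neg_ne_zero.mpr hz0)).map (algebraMap ℂ (H →L[ℂ] H))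
      exact h1.mul (hVunit z hz hz0)
  -- define G
  refine ⟨fun z => ((1 : ℂ) - (δ : ℂ) * z ^ 2) • Ring.inverse (B z), ?_, ?_, ?_, ?_⟩
  · -- differentiability
    intro z hz
    apply DifferentiableAt.differentiableWithinAt
    apply DifferentiableAt.fun_smul
    · exact (differentiableAt_const _).sub ((differentiableAt_const _).mul (differentiableAt_pow 2))
    · apply DifferentiableAt.inverse _ (hBunit z hz)
      apply DifferentiableAt.fun_add
      · exact (differentiableAt_const _).sub (differentiableAt_id.smul_const T)
      · exact ((differentiableAt_const _).mul (differentiableAt_pow 2)).smul_const _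
  · -- value at 0
    have : B 0 = 1 := by simp [hBdef]
    simp [this]
  · -- punctured-disc formula
    intro z hz hz0
    refine ⟨hVunit z hz hz0, ?_⟩
    set V : H →L[ℂ] H := T - (1 / z + (δ : ℂ) * z) • (1 : H →L[ℂ] H) with hVdef
    have hV : IsUnit V := hVunit z hz hz0
    have hB : IsUnit (B z) := hBunit z hz
    have hinvV : Ring.inverse V = (-z) • Ring.inverse (B z) := by
      apply aux_inverse_eq hV
      have h1 : Ring.inverse (B z) * B z = 1 := Ring.inverse_mul_cancel _ hB
      have h2 : B z = (-z) • V := by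
        rw [hBfac z hz0, smul_mul_assoc, one_mul]
      calc ((-z) • Ring.inverse (B z)) * V = Ring.inverse (B z) * ((-z) • V) := by
            rw [smul_mul_assoc, mul_smul_comm]
      _ = 1 := by rw [← h2, h1]
    rw [hinvV, smul_smul]
    have hc : (z * (-(1 / z ^ 2) + (δ : ℂ))) * (-z) = 1 - (δ : ℂ) * z ^ 2 := by
      field_simp; ring
    rw [hc]
  · -- disc identity
    intro z hz
    have hB : IsUnit (B z) := hBunit z hz
    refine ⟨hB, ?_⟩
    have h1 : B z * Ring.inverse (B z) = 1 := Ring.mul_inverse_cancel _ hB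
    have step : (((1 : ℂ) - (δ : ℂ) * z ^ 2) • Ring.inverse (B z)) + 1
        = ((((1 : ℂ) - (δ : ℂ) * z ^ 2) • (1 : H →L[ℂ] H)) + B z) * Ring.inverse (B z) := by
      rw [add_mul, smul_mul_assoc, one_mul, h1]
    rw [step, ← smul_mul_assoc]
    congr 1
    rw [hBdef]
    module
end
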